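/- arXiv:1212.3651 — 5 statements merged into one kernel-verified Lean document; each statement's English description precedes it below -/
import Mathlib

section
/- Let κ, κ̂ : ℝ → ℝ be continuously differentiable with κ(t) − κ̂(t) ≠ 0 for all t, set ρ(t) := 1/(κ(t) − κ̂(t)) and g(t) := ρ(t)²·(κ(t)·κ̂'(t) − κ'(t)·κ̂(t)). Let a ∈ ℝ with a ≠ 0, let θ : ℝ → ℝ be continuously differentiable, and let A, φ₀ ∈ ℝ. Define b₁(t) := a·κ̂(t)·ρ(t) + (A/a)·cos(θ(t) − φ₀) − a·∫₀ᵗ cos(θ(t) − θ(s))·g(s) ds and b₂(t) := −(A/a)·sin(θ(t) − φ₀) + a·∫₀ᵗ sin(θ(t) − θ(s))·g(s) ds. Then b₁ and b₂ are differentiable and satisfy, for all t, b₁'(t) = θ'(t)·b₂(t) and b₂'(t) = θ'(t)·(a·κ̂(t)·ρ(t) − b₁(t)). -/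
open Real intervalIntegral

/-- The explicit integral formulas for `b₁`, `b₂` solve the linear system of ODEs
`b₁' = θ'·b₂`, `b₂' = θ'·(a·κ̂·ρ − b₁)` arising from the rolling problem of two
surfaces with Gaussian curvatures `κ` and `κ̂`. -/
theorem rolling_b_formulas_solve_system
    (κ κh θ : ℝ → ℝ)
    (hκ : ContDiff ℝ 1 κ) (hκh : ContDiff ℝ 1 κh)
    (hne : ∀ t, κ t - κh t ≠ 0)
    (a A φ₀ : ℝ) (ha : a ≠ 0)
    (hθ : ContDiff ℝ 1 θ)
    (ρ g b₁ b₂ : ℝ → ℝ)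
    (hρ : ρ = fun t => (κ t - κh t)⁻¹)
    (hg : g = fun t => ρ t ^ 2 * (κ t * deriv κh t - deriv κ t * κh t))
    (hb₁ : b₁ = fun t => a * κh t * ρ t + (A / a) * Real.cos (θ t - φ₀)
        - a * ∫ s in (0:ℝ)..t, Real.cos (θ t - θ s) * g s)
    (hb₂ : b₂ = fun t => -(A / a) * Real.sin (θ t - φ₀)
        + a * ∫ s in (0:ℝ)..t, Real.sin (θ t - θ s) * g s) :
    ∀ t : ℝ,
      HasDerivAt b₁ (deriv θ t * b₂ t) t
      ∧ HasDerivAt b₂ (deriv θ t * (a * κh t * ρ t - b₁ t)) t := by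
  -- continuity facts
  have hκc := hκ.continuous
  have hκhc := hκh.continuous
  have hθc := hθ.continuous
  have hρc : Continuous ρ := by
    rw [hρ]; exact (hκc.sub hκhc).inv₀ hne
  have hgc : Continuous g := by
    rw [hg]
    exact (hρc.pow 2).mul
      ((hκc.mul (hκh.continuous_deriv le_rfl)).sub ((hκ.continuous_deriv le_rfl).mul hκhc))
  set C : ℝ → ℝ := fun u => ∫ s in (0:ℝ)..u, Real.cos (θ s) * g s with hCdef
  set S : ℝ → ℝ := fun u => ∫ s in (0:ℝ)..u, Real.sin (θ s) * g s with hSdef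
  have hcosc : Continuous fun s => Real.cos (θ s) * g s :=
    (Real.continuous_cos.comp hθc).mul hgc
  have hsinc : Continuous fun s => Real.sin (θ s) * g s :=
    (Real.continuous_sin.comp hθc).mul hgc
  -- rewrite the integrals
  have hIcos : ∀ u : ℝ, (∫ s in (0:ℝ)..u, Real.cos (θ u - θ s) * g s)
      = Real.cos (θ u) * C u + Real.sin (θ u) * S u := by
    intro u
    have h1 : (∫ s in (0:ℝ)..u, Real.cos (θ u - θ s) * g s)
        = ∫ s in (0:ℝ)..u,
            (Real.cos (θ u) * (Real.cos (θ s) * g s)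
              + Real.sin (θ u) * (Real.sin (θ s) * g s)) := by
      apply intervalIntegral.integral_congr
      intro s _
      simp only
      rw [Real.cos_sub]; ring
    rw [h1, intervalIntegral.integral_add
        ((hcosc.intervalIntegrable 0 u).const_mul _)
        ((hsinc.intervalIntegrable 0 u).const_mul _),
      intervalIntegral.integral_const_mul, intervalIntegral.integral_const_mul]
  have hIsin : ∀ u : ℝ, (∫ s in (0:ℝ)..u, Real.sin (θ u - θ s) * g s)
      = Real.sin (θ u) * C u - Real.cos (θ u) * S u := by
    intro u
    have h1 : (∫ s in (0:ℝ)..u, Real.sin (θ u - θ s) * g s)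
        = ∫ s in (0:ℝ)..u,
            (Real.sin (θ u) * (Real.cos (θ s) * g s)
              - Real.cos (θ u) * (Real.sin (θ s) * g s)) := by
      apply intervalIntegral.integral_congr
      intro s _
      simp only
      rw [Real.sin_sub]; ring
    rw [h1, intervalIntegral.integral_sub
        ((hcosc.intervalIntegrable 0 u).const_mul _)
        ((hsinc.intervalIntegrable 0 u).const_mul _),
      intervalIntegral.integral_const_mul, intervalIntegral.integral_const_mul]
  have hb₁' : b₁ = fun u => a * κh u * ρ u + (A / a) * Real.cos (θ u - φ₀)
      - a * (Real.cos (θ u) * C u + Real.sin (θ u) * S u) := by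
    funext u; rw [hb₁]; simp only; rw [hIcos u]
  have hb₂' : b₂ = fun u => -(A / a) * Real.sin (θ u - φ₀)
      + a * (Real.sin (θ u) * C u - Real.cos (θ u) * S u) := by
    funext u; rw [hb₂]; simp only; rw [hIsin u]
  intro t
  have hθt : HasDerivAt θ (deriv θ t) t := (hθ.differentiable one_ne_zero t).hasDerivAt
  have hκt : HasDerivAt κ (deriv κ t) t := (hκ.differentiable one_ne_zero t).hasDerivAt
  have hκht : HasDerivAt κh (deriv κh t) t := (hκh.differentiable one_ne_zero t).hasDerivAt
  have hρt : HasDerivAt ρ (-(deriv κ t - deriv κh t) / (κ t - κh t) ^ 2) t := by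
    rw [hρ]; exact (hκt.sub hκht).inv (hne t)
  -- derivative of a·κ̂·ρ equals a·g
  have h1 : HasDerivAt (fun u => a * κh u * ρ u) (a * g t) t := by
    have this : HasDerivAt (fun u => a * κh u * ρ u)
        (a * deriv κh t * ρ t + a * κh t * (-(deriv κ t - deriv κh t) / (κ t - κh t) ^ 2)) t :=
      ((hκht.const_mul a).mul hρt)
    convert this using 1
    rw [hg, hρ]
    simp only
    field_simp [hne t]
    ring
  have hCt : HasDerivAt C (Real.cos (θ t) * g t) t :=
    (hcosc.integral_hasStrictDerivAt 0 t).hasDerivAt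
  have hSt : HasDerivAt S (Real.sin (θ t) * g t) t :=
    (hsinc.integral_hasStrictDerivAt 0 t).hasDerivAt
  have hcos₀ : HasDerivAt (fun u => Real.cos (θ u - φ₀))
      (-Real.sin (θ t - φ₀) * deriv θ t) t := (hθt.sub_const φ₀).cos
  have hsin₀ : HasDerivAt (fun u => Real.sin (θ u - φ₀))
      (Real.cos (θ t - φ₀) * deriv θ t) t := (hθt.sub_const φ₀).sin
  have hcosθ : HasDerivAt (fun u => Real.cos (θ u)) (-Real.sin (θ t) * deriv θ t) t := hθt.cos
  have hsinθ : HasDerivAt (fun u => Real.sin (θ u)) (Real.cos (θ t) * deriv θ t) t := hθt.sin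
  constructor
  · rw [hb₁']
    have hD : HasDerivAt (fun u => a * κh u * ρ u + (A / a) * Real.cos (θ u - φ₀)
        - a * (Real.cos (θ u) * C u + Real.sin (θ u) * S u))
        (a * g t + (A / a) * (-Real.sin (θ t - φ₀) * deriv θ t)
          - a * ((-Real.sin (θ t) * deriv θ t * C t + Real.cos (θ t) * (Real.cos (θ t) * g t))
            + (Real.cos (θ t) * deriv θ t * S t + Real.sin (θ t) * (Real.sin (θ t) * g t)))) t :=
      (h1.add (hcos₀.const_mul (A / a))).sub
        (((hcosθ.mul hCt).add (hsinθ.mul hSt)).const_mul a)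
    convert hD using 1
    rw [hb₂']
    simp only
    linear_combination (a * g t) * Real.sin_sq_add_cos_sq (θ t)
  · rw [hb₂']
    have hD : HasDerivAt (fun u => -(A / a) * Real.sin (θ u - φ₀)
        + a * (Real.sin (θ u) * C u - Real.cos (θ u) * S u))
        (-(A / a) * (Real.cos (θ t - φ₀) * deriv θ t)
          + a * ((Real.cos (θ t) * deriv θ t * C t + Real.sin (θ t) * (Real.cos (θ t) * g t))
            - (-Real.sin (θ t) * deriv θ t * S t + Real.cos (θ t) * (Real.sin (θ t) * g t)))) t :=
      (hsin₀.const_mul (-(A / a))).add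
        (((hsinθ.mul hCt).sub (hcosθ.mul hSt)).const_mul a)
    convert hD using 1
    rw [hb₁']
    simp only
    ring
end

section
/- Let κ, κ̂ : ℝ → ℝ be continuously differentiable with κ(t) − κ̂(t) ≠ 0 for all t, set ρ(t) := 1/(κ(t) − κ̂(t)) and g(t) := ρ(t)²·(κ(t)·κ̂'(t) − κ'(t)·κ̂(t)). Let a ∈ ℝ with a ≠ 0 and let θ : ℝ → ℝ be continuously differentiable. Suppose b₁, b₂ : ℝ → ℝ are differentiable and satisfy b₁'(t) = θ'(t)·b₂(t) and b₂'(t) = θ'(t)·(a·κ̂(t)·ρ(t) − b₁(t)) for all t. Then there exist constants A, φ₀ ∈ ℝ such that for all t, b₁(t) = a·κ̂(t)·ρ(t) + (A/a)·cos(θ(t) − φ₀) − a·∫₀ᵗ cos(θ(t) − θ(s))·g(s) ds and b₂(t) = −(A/a)·sin(θ(t) − φ₀) + a·∫₀ᵗ sin(θ(t) − θ(s))·g(s) ds. -/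
open Real intervalIntegral

/-- Every solution of the linear system `b₁' = θ'·b₂`, `b₂' = θ'·(a·κ̂·ρ − b₁)`
arising from the rolling problem of two surfaces is given by the explicit
integral formulas, for suitable constants `A`, `φ₀`. -/
theorem rolling_b_system_general_solution
    (κ κh θ : ℝ → ℝ)
    (hκ : ContDiff ℝ 1 κ) (hκh : ContDiff ℝ 1 κh)
    (hne : ∀ t, κ t - κh t ≠ 0)
    (a : ℝ) (ha : a ≠ 0)
    (hθ : ContDiff ℝ 1 θ)
    (ρ g b₁ b₂ : ℝ → ℝ)
    (hρ : ρ = fun t => (κ t - κh t)⁻¹)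
    (hg : g = fun t => ρ t ^ 2 * (κ t * deriv κh t - deriv κ t * κh t))
    (hb₁ : Differentiable ℝ b₁) (hb₂ : Differentiable ℝ b₂)
    (hode₁ : ∀ t, deriv b₁ t = deriv θ t * b₂ t)
    (hode₂ : ∀ t, deriv b₂ t = deriv θ t * (a * κh t * ρ t - b₁ t)) :
    ∃ A φ₀ : ℝ, ∀ t : ℝ,
      b₁ t = a * κh t * ρ t + (A / a) * Real.cos (θ t - φ₀)
          - a * ∫ s in (0:ℝ)..t, Real.cos (θ t - θ s) * g s
      ∧ b₂ t = -(A / a) * Real.sin (θ t - φ₀)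
          + a * ∫ s in (0:ℝ)..t, Real.sin (θ t - θ s) * g s := by
  -- continuity facts
  have hκc : Continuous κ := hκ.continuous
  have hκhc : Continuous κh := hκh.continuous
  have hκ'c : Continuous (deriv κ) := hκ.continuous_deriv le_rfl
  have hκh'c : Continuous (deriv κh) := hκh.continuous_deriv le_rfl
  have hθc : Continuous θ := hθ.continuous
  have hρc : Continuous ρ := by
    rw [hρ]; exact (hκc.sub hκhc).inv₀ hne
  have hgc : Continuous g := by
    rw [hg]
    exact (hρc.pow 2).mul ((hκc.mul hκh'c).sub (hκ'c.mul hκhc))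
  -- pointwise derivative facts
  have hκd : ∀ t, HasDerivAt κ (deriv κ t) t :=
    fun t => (hκ.differentiable one_ne_zero t).hasDerivAt
  have hκhd : ∀ t, HasDerivAt κh (deriv κh t) t :=
    fun t => (hκh.differentiable one_ne_zero t).hasDerivAt
  have hθd : ∀ t, HasDerivAt θ (deriv θ t) t :=
    fun t => (hθ.differentiable one_ne_zero t).hasDerivAt
  have hρd : ∀ t, HasDerivAt ρ (-(deriv κ t - deriv κh t) * ρ t ^ 2) t := by
    intro t
    have h := ((hκd t).sub (hκhd t)).inv (hne t)
    have he : -(deriv κ t - deriv κh t) * ρ t ^ 2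
        = -(deriv κ t - deriv κh t) / (κ t - κh t) ^ 2 := by
      simp only [hρ]; field_simp
    rw [he, hρ]; exact h
  -- derivative of the forcing term a·κ̂·ρ
  have hmd : ∀ t, HasDerivAt (fun x => a * κh x * ρ x) (a * g t) t := by
    intro t
    have h : HasDerivAt (fun x => a * κh x * ρ x)
        (a * deriv κh t * ρ t + a * κh t * (-(deriv κ t - deriv κh t) * ρ t ^ 2)) t :=
      (((hκhd t).const_mul a).mul (hρd t))
    convert h using 1
    simp only [hg, hρ]
    field_simp [hne t]
    ring
  -- the two auxiliary integrals
  set C : ℝ → ℝ := fun t => ∫ s in (0:ℝ)..t, Real.cos (θ s) * g s with hC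
  set S : ℝ → ℝ := fun t => ∫ s in (0:ℝ)..t, Real.sin (θ s) * g s with hS
  have hCgc : Continuous (fun s => Real.cos (θ s) * g s) :=
    (Real.continuous_cos.comp hθc).mul hgc
  have hSgc : Continuous (fun s => Real.sin (θ s) * g s) :=
    (Real.continuous_sin.comp hθc).mul hgc
  have hCd : ∀ t, HasDerivAt C (Real.cos (θ t) * g t) t := fun t =>
    intervalIntegral.integral_hasDerivAt_right (hCgc.intervalIntegrable _ _)
      (hCgc.stronglyMeasurableAtFilter _ _) hCgc.continuousAt
  have hSd : ∀ t, HasDerivAt S (Real.sin (θ t) * g t) t := fun t =>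
    intervalIntegral.integral_hasDerivAt_right (hSgc.intervalIntegrable _ _)
      (hSgc.stronglyMeasurableAtFilter _ _) hSgc.continuousAt
  -- the two conserved quantities
  set F₁ : ℝ → ℝ := fun t =>
    Real.cos (θ t) * (b₁ t - a * κh t * ρ t) - Real.sin (θ t) * b₂ t + a * C t with hF₁
  set F₂ : ℝ → ℝ := fun t =>
    Real.sin (θ t) * (b₁ t - a * κh t * ρ t) + Real.cos (θ t) * b₂ t + a * S t with hF₂
  have hF₁d : ∀ t, HasDerivAt F₁ 0 t := by
    intro t
    have h : HasDerivAt F₁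
        ((-Real.sin (θ t) * deriv θ t) * (b₁ t - a * κh t * ρ t)
          + Real.cos (θ t) * (deriv b₁ t - a * g t)
          - ((Real.cos (θ t) * deriv θ t) * b₂ t + Real.sin (θ t) * deriv b₂ t)
          + a * (Real.cos (θ t) * g t)) t := by
      exact ((((hθd t).cos.mul ((hb₁ t).hasDerivAt.sub (hmd t))).sub
        ((hθd t).sin.mul (hb₂ t).hasDerivAt)).add ((hCd t).const_mul a))
    convert h using 1
    rw [hode₁, hode₂]
    ring
  have hF₂d : ∀ t, HasDerivAt F₂ 0 t := by
    intro t
    have h : HasDerivAt F₂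
        ((Real.cos (θ t) * deriv θ t) * (b₁ t - a * κh t * ρ t)
          + Real.sin (θ t) * (deriv b₁ t - a * g t)
          + ((-Real.sin (θ t) * deriv θ t) * b₂ t + Real.cos (θ t) * deriv b₂ t)
          + a * (Real.sin (θ t) * g t)) t := by
      exact ((((hθd t).sin.mul ((hb₁ t).hasDerivAt.sub (hmd t))).add
        ((hθd t).cos.mul (hb₂ t).hasDerivAt)).add ((hSd t).const_mul a))
    convert h using 1
    rw [hode₁, hode₂]
    ring
  have hF₁const : ∀ t, F₁ t = F₁ 0 := fun t =>
    is_const_of_deriv_eq_zero (fun x => (hF₁d x).differentiableAt)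
      (fun x => (hF₁d x).deriv) t 0
  have hF₂const : ∀ t, F₂ t = F₂ 0 := fun t =>
    is_const_of_deriv_eq_zero (fun x => (hF₂d x).differentiableAt)
      (fun x => (hF₂d x).deriv) t 0
  obtain ⟨c₁, hc₁⟩ : ∃ c, F₁ 0 = c := ⟨_, rfl⟩
  obtain ⟨c₂, hc₂⟩ : ∃ c, F₂ 0 = c := ⟨_, rfl⟩
  set z : ℂ := ⟨c₁, c₂⟩ with hz
  refine ⟨a * ‖z‖, Complex.arg z, fun t => ?_⟩
  have hcos : ‖z‖ * Real.cos z.arg = c₁ := Complex.norm_mul_cos_arg z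
  have hsin : ‖z‖ * Real.sin z.arg = c₂ := Complex.norm_mul_sin_arg z
  have hAa : (a * ‖z‖) / a = ‖z‖ := by field_simp
  -- rewrite the integrals
  have hI₁ : (∫ s in (0:ℝ)..t, Real.cos (θ t - θ s) * g s)
      = Real.cos (θ t) * C t + Real.sin (θ t) * S t := by
    have e1 : (∫ s in (0:ℝ)..t, Real.cos (θ t - θ s) * g s)
        = ∫ s in (0:ℝ)..t, (Real.cos (θ t) * (Real.cos (θ s) * g s)
            + Real.sin (θ t) * (Real.sin (θ s) * g s)) :=
      intervalIntegral.integral_congr (fun s _ => by rw [Real.cos_sub]; ring)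
    rw [e1, intervalIntegral.integral_add
        ((show Continuous fun s => Real.cos (θ t) * (Real.cos (θ s) * g s) from continuous_const.mul hCgc).intervalIntegrable _ _)
        ((show Continuous fun s => Real.sin (θ t) * (Real.sin (θ s) * g s) from continuous_const.mul hSgc).intervalIntegrable _ _),
      intervalIntegral.integral_const_mul, intervalIntegral.integral_const_mul]
  have hI₂ : (∫ s in (0:ℝ)..t, Real.sin (θ t - θ s) * g s)
      = Real.sin (θ t) * C t - Real.cos (θ t) * S t := by
    have e1 : (∫ s in (0:ℝ)..t, Real.sin (θ t - θ s) * g s)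
        = ∫ s in (0:ℝ)..t, (Real.sin (θ t) * (Real.cos (θ s) * g s)
            - Real.cos (θ t) * (Real.sin (θ s) * g s)) :=
      intervalIntegral.integral_congr (fun s _ => by rw [Real.sin_sub]; ring)
    rw [e1, intervalIntegral.integral_sub
        ((show Continuous fun s => Real.sin (θ t) * (Real.cos (θ s) * g s) from continuous_const.mul hCgc).intervalIntegrable _ _)
        ((show Continuous fun s => Real.cos (θ t) * (Real.sin (θ s) * g s) from continuous_const.mul hSgc).intervalIntegrable _ _),
      intervalIntegral.integral_const_mul, intervalIntegral.integral_const_mul]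
  have h1 : Real.cos (θ t) * (b₁ t - a * κh t * ρ t) - Real.sin (θ t) * b₂ t + a * C t = c₁ := by
    rw [← hc₁]; exact hF₁const t
  have h2 : Real.sin (θ t) * (b₁ t - a * κh t * ρ t) + Real.cos (θ t) * b₂ t + a * S t = c₂ := by
    rw [← hc₂]; exact hF₂const t
  have hpyth := Real.sin_sq_add_cos_sq (θ t)
  constructor
  · rw [hI₁, hAa, Real.cos_sub]
    linear_combination Real.cos (θ t) * h1 + Real.sin (θ t) * h2
      - (b₁ t - a * κh t * ρ t) * hpyth - Real.cos (θ t) * hcos - Real.sin (θ t) * hsin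
  · rw [hI₂, hAa, Real.sin_sub]
    linear_combination (- Real.sin (θ t)) * h1 + Real.cos (θ t) * h2
      - b₂ t * hpyth + Real.sin (θ t) * hcos - Real.cos (θ t) * hsin
end

section
/- Let κ, κ̂ : ℝ → ℝ be continuously differentiable with κ(t) − κ̂(t) ≠ 0 for all t, and set ρ(t) := 1/(κ(t) − κ̂(t)). Let a ∈ ℝ with a ≠ 0 and let θ : ℝ → ℝ be twice continuously differentiable. Then the following are equivalent: (i) there exist continuously differentiable functions L, b₁, b₂ : ℝ → ℝ satisfying, for all t, θ'(t) = L(t)·(κ(t) − κ̂(t)), L'(t) = a·b₂(t), b₁'(t) = θ'(t)·b₂(t), and b₂'(t) = a·L(t)·κ̂(t) − θ'(t)·b₁(t); (ii) there exist constants A, φ₀ ∈ ℝ such that for all t, θ''(t) + (ρ'(t)/ρ(t))·θ'(t) = (A/ρ(t))·sin(θ(t) − φ₀) + (a²/ρ(t))·F(t), where F(t) := ∫₀ᵗ ρ(s)²·sin(θ(t) − θ(s))·(κ(s)·κ̂'(s) − κ'(s)·κ̂(s)) ds. -/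
open Real intervalIntegral

/-- For two surfaces with Gaussian curvatures `κ`, `κ̂` rolling on each other
without twisting or slipping, the first-order normal geodesic system for the
direction angle `θ` is equivalent to a pendulum equation whose length varies as
`ρ(t) = 1/(κ(t) − κ̂(t))`, with an extra forcing term `(a²/ρ)·F(t)`. -/
theorem rolling_surfaces_geodesic_iff_pendulum
    (κ κh θ : ℝ → ℝ)
    (hκ : ContDiff ℝ 1 κ) (hκh : ContDiff ℝ 1 κh)
    (hne : ∀ t, κ t - κh t ≠ 0)
    (a : ℝ) (ha : a ≠ 0)
    (hθ : ContDiff ℝ 2 θ)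
    (ρ : ℝ → ℝ) (hρ : ρ = fun t => (κ t - κh t)⁻¹) :
    (∃ L b₁ b₂ : ℝ → ℝ,
        ContDiff ℝ 1 L ∧ ContDiff ℝ 1 b₁ ∧ ContDiff ℝ 1 b₂ ∧
        ∀ t : ℝ,
          deriv θ t = L t * (κ t - κh t)
          ∧ deriv L t = a * b₂ t
          ∧ deriv b₁ t = deriv θ t * b₂ t
          ∧ deriv b₂ t = a * L t * κh t - deriv θ t * b₁ t)
    ↔ (∃ A φ₀ : ℝ, ∀ t : ℝ,
        deriv (deriv θ) t + (deriv ρ t / ρ t) * deriv θ t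
          = (A / ρ t) * Real.sin (θ t - φ₀)
            + (a ^ 2 / ρ t) *
              ∫ s in (0:ℝ)..t,
                ρ s ^ 2 * Real.sin (θ t - θ s)
                  * (κ s * deriv κh s - deriv κ s * κh s)) := by
  -- basic facts
  have hneρ : ∀ t, ρ t ≠ 0 := by intro t; rw [hρ]; exact inv_ne_zero (hne t)
  have hκ'c : Continuous (deriv κ) := hκ.continuous_deriv le_rfl
  have hκh'c : Continuous (deriv κh) := hκh.continuous_deriv le_rfl
  have hκd : ∀ t, HasDerivAt κ (deriv κ t) t :=
    fun t => (hκ.differentiable one_ne_zero t).hasDerivAt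
  have hκhd : ∀ t, HasDerivAt κh (deriv κh t) t :=
    fun t => (hκh.differentiable one_ne_zero t).hasDerivAt
  have hθ1 : ContDiff ℝ 1 θ := hθ.of_le (by norm_num)
  have hθd : ∀ t, HasDerivAt θ (deriv θ t) t :=
    fun t => (hθ1.differentiable one_ne_zero t).hasDerivAt
  have hθ'C : ContDiff ℝ 1 (deriv θ) := by
    have h2 : ((1:WithTop ℕ∞)+1) = 2 := by norm_num
    rw [← h2] at hθ
    exact (contDiff_succ_iff_deriv.mp hθ).2.2
  have hθ'd : ∀ t, HasDerivAt (deriv θ) (deriv (deriv θ) t) t :=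
    fun t => (hθ'C.differentiable one_ne_zero t).hasDerivAt
  have hρC : ContDiff ℝ 1 ρ := by rw [hρ]; exact (hκ.sub hκh).inv hne
  have hρd : ∀ t, HasDerivAt ρ (-(deriv κ t - deriv κh t) / (κ t - κh t) ^ 2) t := by
    intro t; rw [hρ]; exact ((hκd t).sub (hκhd t)).inv (hne t)
  have hρ'v : ∀ t, deriv ρ t = -(deriv κ t - deriv κh t) / (κ t - κh t) ^ 2 :=
    fun t => (hρd t).deriv
  -- the density `g` and its antiderivative-related functions
  set g : ℝ → ℝ := fun s => ρ s ^ 2 * (κ s * deriv κh s - deriv κ s * κh s) with hgdef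
  have hgc : Continuous g := by
    rw [hgdef]
    exact (hρC.continuous.pow 2).mul
      ((hκ.continuous.mul hκh'c).sub (hκ'c.mul hκh.continuous))
  set G : ℝ → ℝ := fun t => κh t * ρ t with hGdef
  have hGd : ∀ t, HasDerivAt G (g t) t := by
    intro t
    have h := (hκhd t).mul (hρd t)
    refine h.congr_deriv (Eq.symm ?_)
    have hk := hne t
    rw [hgdef, hρ]
    field_simp
    ring
  set P : ℝ → ℝ := fun t => ∫ s in (0:ℝ)..t, Real.cos (θ s) * g s with hPdef
  set Q : ℝ → ℝ := fun t => ∫ s in (0:ℝ)..t, Real.sin (θ s) * g s with hQdef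
  have hcg : Continuous fun s => Real.cos (θ s) * g s :=
    (Real.continuous_cos.comp hθ1.continuous).mul hgc
  have hsg : Continuous fun s => Real.sin (θ s) * g s :=
    (Real.continuous_sin.comp hθ1.continuous).mul hgc
  have hPd : ∀ t, HasDerivAt P (Real.cos (θ t) * g t) t := fun t =>
    intervalIntegral.integral_hasDerivAt_right (hcg.intervalIntegrable _ _)
      (hcg.stronglyMeasurableAtFilter _ _) hcg.continuousAt
  have hQd : ∀ t, HasDerivAt Q (Real.sin (θ t) * g t) t := fun t =>
    intervalIntegral.integral_hasDerivAt_right (hsg.intervalIntegrable _ _)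
      (hsg.stronglyMeasurableAtFilter _ _) hsg.continuousAt
  set F : ℝ → ℝ := fun t => Real.sin (θ t) * P t - Real.cos (θ t) * Q t with hFdef
  set Ft : ℝ → ℝ := fun t => Real.cos (θ t) * P t + Real.sin (θ t) * Q t with hFtdef
  have hFd : ∀ t, HasDerivAt F (deriv θ t * Ft t) t := by
    intro t
    have h := ((hθd t).sin.mul (hPd t)).sub ((hθd t).cos.mul (hQd t))
    refine h.congr_deriv (Eq.symm ?_)
    rw [hFtdef]
    ring
  have hFtd : ∀ t, HasDerivAt Ft (-(deriv θ t) * F t + g t) t := by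
    intro t
    have h := ((hθd t).cos.mul (hPd t)).add ((hθd t).sin.mul (hQd t))
    refine h.congr_deriv (Eq.symm ?_)
    simp only [hFdef]
    linear_combination (-(g t)) * Real.sin_sq_add_cos_sq (θ t)
  -- the integral in the statement equals `F`
  have hIF : ∀ t, (∫ s in (0:ℝ)..t,
      ρ s ^ 2 * Real.sin (θ t - θ s) * (κ s * deriv κh s - deriv κ s * κh s)) = F t := by
    intro t
    have h1 : ∀ s, ρ s ^ 2 * Real.sin (θ t - θ s) * (κ s * deriv κh s - deriv κ s * κh s)
        = Real.sin (θ t) * (Real.cos (θ s) * g s)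
          - Real.cos (θ t) * (Real.sin (θ s) * g s) := by
      intro s; rw [Real.sin_sub, hgdef]; ring
    simp only [h1]
    rw [intervalIntegral.integral_sub ((show
          Continuous fun s => Real.sin (θ t) * (Real.cos (θ s) * g s) from
            continuous_const.mul hcg).intervalIntegrable _ _)
        ((show
          Continuous fun s => Real.cos (θ t) * (Real.sin (θ s) * g s) from
            continuous_const.mul hsg).intervalIntegrable _ _),
      intervalIntegral.integral_const_mul, intervalIntegral.integral_const_mul]
  constructor
  · -- forward direction
    rintro ⟨L, b₁, b₂, hL, hb₁, hb₂, heq⟩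
    have hLd : ∀ t, HasDerivAt L (deriv L t) t :=
      fun t => (hL.differentiable one_ne_zero t).hasDerivAt
    have hb₁d : ∀ t, HasDerivAt b₁ (deriv b₁ t) t :=
      fun t => (hb₁.differentiable one_ne_zero t).hasDerivAt
    have hb₂d : ∀ t, HasDerivAt b₂ (deriv b₂ t) t :=
      fun t => (hb₂.differentiable one_ne_zero t).hasDerivAt
    have hLval : ∀ t, L t = ρ t * deriv θ t := by
      intro t
      have h := (heq t).1
      rw [hρ]
      field_simp [hne t]
      linarith [h]
    -- the shifted functions
    set c₁ : ℝ → ℝ := fun t => b₁ t - (a * G t - a * Ft t) with hc₁def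
    set c₂ : ℝ → ℝ := fun t => b₂ t - a * F t with hc₂def
    have hc₁d : ∀ t, HasDerivAt c₁ (deriv θ t * c₂ t) t := by
      intro t
      have h := (hb₁d t).sub (((hGd t).const_mul a).sub ((hFtd t).const_mul a))
      refine h.congr_deriv (Eq.symm ?_)
      rw [hc₂def, (heq t).2.2.1]
      ring
    have hc₂d : ∀ t, HasDerivAt c₂ (-(deriv θ t) * c₁ t) t := by
      intro t
      have h := (hb₂d t).sub ((hFd t).const_mul a)
      refine h.congr_deriv (Eq.symm ?_)
      rw [hc₁def, (heq t).2.2.2, hLval t, hGdef]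
      ring
    set x : ℝ → ℝ := fun t => c₁ t * Real.sin (θ t) + c₂ t * Real.cos (θ t) with hxdef
    set y : ℝ → ℝ := fun t => c₁ t * Real.cos (θ t) - c₂ t * Real.sin (θ t) with hydef
    have hxd : ∀ t, HasDerivAt x 0 t := by
      intro t
      have h := ((hc₁d t).mul (hθd t).sin).add ((hc₂d t).mul (hθd t).cos)
      refine h.congr_deriv (Eq.symm ?_)
      ring
    have hyd : ∀ t, HasDerivAt y 0 t := by
      intro t
      have h := ((hc₁d t).mul (hθd t).cos).sub ((hc₂d t).mul (hθd t).sin)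
      refine h.congr_deriv (Eq.symm ?_)
      ring
    have hxc : ∀ t, x t = x 0 := fun t =>
      is_const_of_deriv_eq_zero (fun s => (hxd s).differentiableAt)
        (fun s => (hxd s).deriv) t 0
    have hyc : ∀ t, y t = y 0 := fun t =>
      is_const_of_deriv_eq_zero (fun s => (hyd s).differentiableAt)
        (fun s => (hyd s).deriv) t 0
    have hc₂val : ∀ t, c₂ t = x 0 * Real.cos (θ t) - y 0 * Real.sin (θ t) := by
      intro t
      rw [← hxc t, ← hyc t]
      simp only [hxdef, hydef]
      linear_combination (-(c₂ t)) * Real.sin_sq_add_cos_sq (θ t)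
    -- choose the constants
    set z : ℂ := Complex.mk (-(a * y 0)) (-(a * x 0)) with hzdef
    refine ⟨‖z‖, Complex.arg z, fun t => ?_⟩
    have hA1 : ‖z‖ * Real.cos (Complex.arg z) = -(a * y 0) :=
      Complex.norm_mul_cos_arg z
    have hA2 : ‖z‖ * Real.sin (Complex.arg z) = -(a * x 0) :=
      Complex.norm_mul_sin_arg z
    have hb2v : a * b₂ t = ‖z‖ * Real.sin (θ t - Complex.arg z) + a ^ 2 * F t := by
      have h1 : b₂ t = c₂ t + a * F t := by rw [hc₂def]; ring
      rw [h1, hc₂val t, Real.sin_sub]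
      linear_combination Real.cos (θ t) * hA2 - Real.sin (θ t) * hA1
    have hθ'eq : deriv θ = fun t => L t * (κ t - κh t) := funext fun t => (heq t).1
    have h2 : deriv (deriv θ) t
        = deriv L t * (κ t - κh t) + L t * (deriv κ t - deriv κh t) := by
      rw [hθ'eq]
      exact ((hLd t).mul ((hκd t).sub (hκhd t))).deriv
    rw [hIF t, h2, hρ'v t, (heq t).2.1, hLval t, hρ]
    simp only
    have hk := hne t
    field_simp
    linear_combination (κ t - κh t) ^ 2 * hb2v
  · -- converse direction
    rintro ⟨A, φ₀, heq⟩
    have hPC : ContDiff ℝ 1 P := by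
      refine contDiff_one_iff_deriv.mpr ⟨fun t => (hPd t).differentiableAt, ?_⟩
      have hder : deriv P = fun t => Real.cos (θ t) * g t := funext fun t => (hPd t).deriv
      rw [hder]; exact hcg
    have hQC : ContDiff ℝ 1 Q := by
      refine contDiff_one_iff_deriv.mpr ⟨fun t => (hQd t).differentiableAt, ?_⟩
      have hder : deriv Q = fun t => Real.sin (θ t) * g t := funext fun t => (hQd t).deriv
      rw [hder]; exact hsg
    have hsinθ : ContDiff ℝ 1 fun t => Real.sin (θ t) := Real.contDiff_sin.comp hθ1
    have hcosθ : ContDiff ℝ 1 fun t => Real.cos (θ t) := Real.contDiff_cos.comp hθ1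
    have hFC : ContDiff ℝ 1 F := by
      rw [hFdef]; exact (hsinθ.mul hPC).sub (hcosθ.mul hQC)
    have hFtC : ContDiff ℝ 1 Ft := by
      rw [hFtdef]; exact (hcosθ.mul hPC).add (hsinθ.mul hQC)
    have hGC : ContDiff ℝ 1 G := by rw [hGdef]; exact hκh.mul hρC
    have hb₁C : ContDiff ℝ 1
        fun t => a * G t - (A * Real.cos (θ t - φ₀) + a ^ 2 * Ft t) / a :=
      (contDiff_const.mul hGC).sub
        (((contDiff_const.mul (Real.contDiff_cos.comp (hθ1.sub contDiff_const))).add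
          (contDiff_const.mul hFtC)).div_const a)
    have hb₂C : ContDiff ℝ 1
        fun t => (A * Real.sin (θ t - φ₀) + a ^ 2 * F t) / a :=
      ((contDiff_const.mul (Real.contDiff_sin.comp (hθ1.sub contDiff_const))).add
        (contDiff_const.mul hFC)).div_const a
    have hkey : ∀ t, ρ t * deriv (deriv θ) t + deriv ρ t * deriv θ t
        = A * Real.sin (θ t - φ₀) + a ^ 2 * F t := by
      intro t
      have h := heq t
      rw [hIF t] at h
      have h2 := congrArg (fun w => w * ρ t) h
      field_simp [hneρ t] at h2
      linarith [h2]
    refine ⟨fun t => ρ t * deriv θ t,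
      fun t => a * G t - (A * Real.cos (θ t - φ₀) + a ^ 2 * Ft t) / a,
      fun t => (A * Real.sin (θ t - φ₀) + a ^ 2 * F t) / a, ?_, ?_, ?_, ?_⟩
    · exact hρC.mul hθ'C
    · exact hb₁C
    · exact hb₂C
    · intro t
      refine ⟨?_, ?_, ?_, ?_⟩
      · rw [hρ]
        simp only
        rw [mul_comm, ← mul_assoc, mul_inv_cancel₀ (hne t), one_mul]
      · -- deriv L = a * b₂
        have hLd : deriv (fun t => ρ t * deriv θ t) t
            = deriv ρ t * deriv θ t + ρ t * deriv (deriv θ) t :=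
          (((hρd t).differentiableAt.hasDerivAt).mul (hθ'd t)).deriv
        rw [hLd, mul_div_cancel₀ _ ha]
        linarith [hkey t]
      · -- deriv b₁ = θ' * b₂
        have hd1 : HasDerivAt (fun t => θ t - φ₀) (deriv θ t) t := (hθd t).sub_const φ₀
        have hb1d : deriv (fun t => a * G t - (A * Real.cos (θ t - φ₀) + a ^ 2 * Ft t) / a) t
            = a * g t - (A * (-Real.sin (θ t - φ₀) * deriv θ t)
                + a ^ 2 * (-(deriv θ t) * F t + g t)) / a :=
          (((hGd t).const_mul a).sub
            (((hd1.cos.const_mul A).add ((hFtd t).const_mul (a ^ 2))).div_const a)).deriv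
        rw [hb1d]
        field_simp
        ring
      · -- deriv b₂ = a L κh − θ' b₁
        have hd1 : HasDerivAt (fun t => θ t - φ₀) (deriv θ t) t := (hθd t).sub_const φ₀
        have hb2d : deriv (fun t => (A * Real.sin (θ t - φ₀) + a ^ 2 * F t) / a) t
            = (A * (Real.cos (θ t - φ₀) * deriv θ t)
                + a ^ 2 * (deriv θ t * Ft t)) / a :=
          (((hd1.sin.const_mul A).add ((hFd t).const_mul (a ^ 2))).div_const a).deriv
        rw [hb2d]
        simp only [hGdef, hρ]
        have hk := hne t
        field_simp
        ring
end

section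
/- Let κ, κ̂ : ℝ → ℝ be continuously differentiable with κ(t) − κ̂(t) ≠ 0 for all t, set ρ(t) := 1/(κ(t) − κ̂(t)), and suppose κ(t)·κ̂'(t) = κ'(t)·κ̂(t) for all t (for example, if one of κ, κ̂ is a constant multiple of the other, or if one of them is identically zero). Let a ∈ ℝ with a ≠ 0 and let θ : ℝ → ℝ be twice continuously differentiable. If there exist continuously differentiable functions L, b₁, b₂ : ℝ → ℝ satisfying, for all t, θ'(t) = L(t)·(κ(t) − κ̂(t)), L'(t) = a·b₂(t), b₁'(t) = θ'(t)·b₂(t), and b₂'(t) = a·L(t)·κ̂(t) − θ'(t)·b₁(t), then there exist constants A, φ₀ ∈ ℝ such that θ''(t) + (ρ'(t)/ρ(t))·θ'(t) = (A/ρ(t))·sin(θ(t) − φ₀) for all t; that is, θ satisfies the equation of a pendulum whose length varies as ρ(t). -/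
open Real

/-- If `κ·κ̂' = κ'·κ̂` (e.g. if one Gaussian curvature is a constant multiple of
the other), then the normal geodesic equations of two surfaces rolling without
twisting or slipping reduce to the equation of a pendulum whose length varies
as `ρ(t) = 1/(κ(t) − κ̂(t))`. -/
theorem rolling_surfaces_proportional_curvature_pendulum
    (κ κh θ : ℝ → ℝ)
    (hκ : ContDiff ℝ 1 κ) (hκh : ContDiff ℝ 1 κh)
    (hne : ∀ t, κ t - κh t ≠ 0)
    (ρ : ℝ → ℝ) (hρ : ρ = fun t => (κ t - κh t)⁻¹)
    (hprop : ∀ t, κ t * deriv κh t = deriv κ t * κh t)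
    (a : ℝ) (ha : a ≠ 0)
    (hθ : ContDiff ℝ 2 θ)
    (L b₁ b₂ : ℝ → ℝ)
    (hL : ContDiff ℝ 1 L) (hb₁ : ContDiff ℝ 1 b₁) (hb₂ : ContDiff ℝ 1 b₂)
    (hsys : ∀ t : ℝ,
      deriv θ t = L t * (κ t - κh t)
      ∧ deriv L t = a * b₂ t
      ∧ deriv b₁ t = deriv θ t * b₂ t
      ∧ deriv b₂ t = a * L t * κh t - deriv θ t * b₁ t) :
    ∃ A φ₀ : ℝ, ∀ t : ℝ,
      deriv (deriv θ) t + (deriv ρ t / ρ t) * deriv θ t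
        = (A / ρ t) * Real.sin (θ t - φ₀) := by
  have hκ' : ∀ t, HasDerivAt κ (deriv κ t) t :=
    fun t => (hκ.differentiable one_ne_zero t).hasDerivAt
  have hκh' : ∀ t, HasDerivAt κh (deriv κh t) t :=
    fun t => (hκh.differentiable one_ne_zero t).hasDerivAt
  have hL' : ∀ t, HasDerivAt L (deriv L t) t :=
    fun t => (hL.differentiable one_ne_zero t).hasDerivAt
  have hb₁' : ∀ t, HasDerivAt b₁ (deriv b₁ t) t :=
    fun t => (hb₁.differentiable one_ne_zero t).hasDerivAt
  have hb₂' : ∀ t, HasDerivAt b₂ (deriv b₂ t) t :=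
    fun t => (hb₂.differentiable one_ne_zero t).hasDerivAt
  have hθ' : ∀ t, HasDerivAt θ (deriv θ t) t :=
    fun t => (hθ.differentiable two_ne_zero t).hasDerivAt
  -- Step 1: κh = c * (κ - κh) for a constant c
  set c : ℝ := κh 0 * (κ 0 - κh 0)⁻¹ with hcdef
  have hg : ∀ t, HasDerivAt (fun t => κh t * (κ t - κh t)⁻¹) 0 t := by
    intro t
    have h1 := ((hκ' t).sub (hκh' t)).inv (hne t)
    have h2 := (hκh' t).mul h1
    refine h2.congr_deriv ?_
    symm
    have hd := hne t
    simp only [Pi.inv_apply, Pi.sub_apply]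
    field_simp
    linear_combination -(hprop t)
  have hgc : ∀ t, κh t * (κ t - κh t)⁻¹ = c := by
    intro t
    have := is_const_of_deriv_eq_zero (f := fun t => κh t * (κ t - κh t)⁻¹)
      (fun t => (hg t).differentiableAt) (fun t => (hg t).deriv) t 0
    simpa [hcdef] using this
  have hc : ∀ t, κh t = c * (κ t - κh t) := by
    intro t
    have h := hgc t
    field_simp at h
    exact (div_eq_iff (hne t)).mp h
  -- Step 2: conserved quantities
  have hf₁ : ∀ t, HasDerivAt
      (fun t => b₂ t * Real.cos (θ t) + b₁ t * Real.sin (θ t) - a * c * Real.sin (θ t)) 0 t := by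
    intro t
    have h1 := ((hb₂' t).mul ((hθ' t).cos)).add ((hb₁' t).mul ((hθ' t).sin))
    have h2 := h1.sub ((((hθ' t).sin)).const_mul (a * c))
    refine h2.congr_deriv ?_
    symm
    obtain ⟨hA, hB, hC, hD⟩ := hsys t
    rw [hC, hD, hc t, hA]
    ring
  have hf₂ : ∀ t, HasDerivAt
      (fun t => b₂ t * Real.sin (θ t) - b₁ t * Real.cos (θ t) + a * c * Real.cos (θ t)) 0 t := by
    intro t
    have h1 := ((hb₂' t).mul ((hθ' t).sin)).sub ((hb₁' t).mul ((hθ' t).cos))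
    have h2 := h1.add ((((hθ' t).cos)).const_mul (a * c))
    refine h2.congr_deriv ?_
    symm
    obtain ⟨hA, hB, hC, hD⟩ := hsys t
    rw [hC, hD, hc t, hA]
    ring
  set C₁ : ℝ := b₂ 0 * Real.cos (θ 0) + b₁ 0 * Real.sin (θ 0) - a * c * Real.sin (θ 0) with hC₁
  set C₂ : ℝ := b₂ 0 * Real.sin (θ 0) - b₁ 0 * Real.cos (θ 0) + a * c * Real.cos (θ 0) with hC₂
  have hf₁c : ∀ t, b₂ t * Real.cos (θ t) + b₁ t * Real.sin (θ t) - a * c * Real.sin (θ t) = C₁ := by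
    intro t
    exact is_const_of_deriv_eq_zero
      (fun t => (hf₁ t).differentiableAt) (fun t => (hf₁ t).deriv) t 0
  have hf₂c : ∀ t, b₂ t * Real.sin (θ t) - b₁ t * Real.cos (θ t) + a * c * Real.cos (θ t) = C₂ := by
    intro t
    exact is_const_of_deriv_eq_zero
      (fun t => (hf₂ t).differentiableAt) (fun t => (hf₂ t).deriv) t 0
  have hb2 : ∀ t, b₂ t = C₁ * Real.cos (θ t) + C₂ * Real.sin (θ t) := by
    intro t
    have h1 := hf₁c t
    have h2 := hf₂c t
    have h3 := Real.sin_sq_add_cos_sq (θ t)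
    linear_combination Real.cos (θ t) * h1 + Real.sin (θ t) * h2 - b₂ t * h3
  -- Step 3: choose A, φ₀
  set z : ℂ := ⟨a * C₂, -(a * C₁)⟩ with hz
  refine ⟨‖z‖, Complex.arg z, fun t => ?_⟩
  have hAc : ‖z‖ * Real.cos (Complex.arg z) = a * C₂ := Complex.norm_mul_cos_arg z
  have hAs : ‖z‖ * Real.sin (Complex.arg z) = -(a * C₁) := Complex.norm_mul_sin_arg z
  -- derivatives of deriv θ and ρ
  have hdθ : deriv θ = fun t => L t * (κ t - κh t) := funext fun t => (hsys t).1
  have hθ'' : deriv (deriv θ) t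
      = deriv L t * (κ t - κh t) + L t * (deriv κ t - deriv κh t) := by
    rw [hdθ]
    exact ((hL' t).mul ((hκ' t).sub (hκh' t))).deriv
  have hρ' : deriv ρ t = -(deriv κ t - deriv κh t) / (κ t - κh t) ^ 2 := by
    rw [hρ]
    exact (((hκ' t).sub (hκh' t)).inv (hne t)).deriv
  obtain ⟨hA, hB, _, _⟩ := hsys t
  have hab : a * b₂ t = ‖z‖ * Real.sin (θ t - Complex.arg z) := by
    rw [Real.sin_sub, hb2 t]
    linear_combination Real.cos (θ t) * hAs - Real.sin (θ t) * hAc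
  have hd := hne t
  rw [hθ'', hρ', hρ, hA, hB]
  field_simp
  linear_combination (κ t - κh t) * hab
end

section
/- Let κ, κ̂ ∈ ℝ be constants with κ ≠ κ̂, let a ∈ ℝ with a ≠ 0, and let θ : ℝ → ℝ be twice continuously differentiable. If there exist continuously differentiable functions L, b₁, b₂ : ℝ → ℝ satisfying, for all t, θ'(t) = L(t)·(κ − κ̂), L'(t) = a·b₂(t), b₁'(t) = θ'(t)·b₂(t), and b₂'(t) = a·L(t)·κ̂ − θ'(t)·b₁(t), then there exist constants A, φ₀ ∈ ℝ such that θ''(t) = A·(κ − κ̂)·sin(θ(t) − φ₀) for all t; that is, θ solves the classical pendulum equation with pendulum length ρ = 1/(κ − κ̂). -/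
open Real

lemma exists_polar (x y : ℝ) : ∃ A φ : ℝ, A * Real.cos φ = x ∧ A * Real.sin φ = y := by
  refine ⟨‖(⟨x, y⟩ : ℂ)‖, Complex.arg ⟨x, y⟩, ?_, ?_⟩
  · simpa using Complex.norm_mul_cos_arg ⟨x, y⟩
  · simpa using Complex.norm_mul_sin_arg ⟨x, y⟩

/-- For two surfaces of constant Gaussian curvatures `κ ≠ κ̂` rolling on each
other without twisting or slipping, the direction angle `θ` of a normal
geodesic satisfies the classical pendulum equation with pendulum length
`ρ = 1/(κ − κ̂)`. -/
theorem rolling_constant_curvature_pendulum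
    (κ κh : ℝ) (hne : κ ≠ κh)
    (a : ℝ) (ha : a ≠ 0)
    (θ : ℝ → ℝ) (hθ : ContDiff ℝ 2 θ)
    (L b₁ b₂ : ℝ → ℝ)
    (hL : ContDiff ℝ 1 L) (hb₁ : ContDiff ℝ 1 b₁) (hb₂ : ContDiff ℝ 1 b₂)
    (hsys : ∀ t : ℝ,
      deriv θ t = L t * (κ - κh)
      ∧ deriv L t = a * b₂ t
      ∧ deriv b₁ t = deriv θ t * b₂ t
      ∧ deriv b₂ t = a * L t * κh - deriv θ t * b₁ t) :
    ∃ A φ₀ : ℝ, ∀ t : ℝ,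
      deriv (deriv θ) t = A * (κ - κh) * Real.sin (θ t - φ₀) := by
  have hκ : κ - κh ≠ 0 := sub_ne_zero.mpr hne
  have hθd : Differentiable ℝ θ := hθ.differentiable (by norm_num)
  have hLd : Differentiable ℝ L := hL.differentiable (by norm_num)
  have hb₁d : Differentiable ℝ b₁ := hb₁.differentiable (by norm_num)
  have hb₂d : Differentiable ℝ b₂ := hb₂.differentiable (by norm_num)
  set c : ℝ := a * κh / (κ - κh) with hc
  set P : ℝ → ℝ := fun t => (b₁ t - c) * Real.cos (θ t) - b₂ t * Real.sin (θ t) with hPdef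
  set Q : ℝ → ℝ := fun t => (b₁ t - c) * Real.sin (θ t) + b₂ t * Real.cos (θ t) with hQdef
  have hcos : ∀ t : ℝ, HasDerivAt (fun t => Real.cos (θ t)) (-Real.sin (θ t) * deriv θ t) t :=
    fun t => (Real.hasDerivAt_cos (θ t)).comp t (hθd t).hasDerivAt
  have hsin : ∀ t : ℝ, HasDerivAt (fun t => Real.sin (θ t)) (Real.cos (θ t) * deriv θ t) t :=
    fun t => (Real.hasDerivAt_sin (θ t)).comp t (hθd t).hasDerivAt
  have hB : ∀ t : ℝ, HasDerivAt (fun t => b₁ t - c) (deriv b₁ t) t :=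
    fun t => (hb₁d t).hasDerivAt.sub_const c
  have hPd : ∀ t : ℝ, HasDerivAt P 0 t := by
    intro t
    obtain ⟨h1, h2, h3, h4⟩ := hsys t
    have H := ((hB t).mul (hcos t)).sub (((hb₂d t).hasDerivAt).mul (hsin t))
    refine H.congr_deriv ?_
    rw [h3, h4, h1, hc]
    field_simp
    ring
  have hQd : ∀ t : ℝ, HasDerivAt Q 0 t := by
    intro t
    obtain ⟨h1, h2, h3, h4⟩ := hsys t
    have H := ((hB t).mul (hsin t)).add (((hb₂d t).hasDerivAt).mul (hcos t))
    refine H.congr_deriv ?_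
    rw [h3, h4, h1, hc]
    field_simp
    ring
  have hPc : ∀ t : ℝ, P t = P 0 := fun t =>
    is_const_of_deriv_eq_zero (fun s => (hPd s).differentiableAt)
      (fun s => (hPd s).deriv) t 0
  have hQc : ∀ t : ℝ, Q t = Q 0 := fun t =>
    is_const_of_deriv_eq_zero (fun s => (hQd s).differentiableAt)
      (fun s => (hQd s).deriv) t 0
  -- recover b₂ from the conserved quantities
  have hb₂eq : ∀ t : ℝ, b₂ t = Q 0 * Real.cos (θ t) - P 0 * Real.sin (θ t) := by
    intro t
    have key : b₂ t = Q t * Real.cos (θ t) - P t * Real.sin (θ t) := by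
      simp only [hPdef, hQdef]
      linear_combination (-(b₂ t)) * Real.sin_sq_add_cos_sq (θ t)
    rw [key, hPc t, hQc t]
  -- second derivative of θ
  have hθ' : deriv θ = fun t => L t * (κ - κh) := funext fun t => (hsys t).1
  have hθ'' : ∀ t : ℝ, deriv (deriv θ) t = a * b₂ t * (κ - κh) := by
    intro t
    rw [hθ']
    rw [(((hLd t).hasDerivAt).mul_const (κ - κh)).deriv, (hsys t).2.1]
  obtain ⟨A, φ₀, hA1, hA2⟩ := exists_polar (-(a * P 0)) (-(a * Q 0))
  refine ⟨A, φ₀, fun t => ?_⟩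
  rw [hθ'' t, hb₂eq t, Real.sin_sub]
  linear_combination (-((κ - κh) * Real.sin (θ t))) * hA1 + ((κ - κh) * Real.cos (θ t)) * hA2
end
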